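/- With F as above, for μ in the interior of A and any admissible direction ν, the map F is Fréchet differentiable at μ with derivative DF(μ)ν = u̇, where u̇ ∈ H¹(Ω) is the unique solution of a(μ; u̇, v) = −∫_Ω ν u v dx for all v ∈ H¹(Ω), u = F(μ). Moreover the remainder estimate ‖F(μ+ν) − F(μ) − u̇‖_{H¹(Ω)} ≤ c_b³ c_f ‖ν‖²_{L^∞(Ω)} holds. -/

import Mathlib

open MeasureTheory
open scoped RealInnerProductSpace

private lemma int_abs_mul_le {X : Type*} [MeasurableSpace X] {m : Measure X} {f g : X → ℝ}
    (hfg : Integrable (fun x => f x * g x) m)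
    (hf : Integrable (fun x => f x * f x) m)
    (hg : Integrable (fun x => g x * g x) m)
    {a b : ℝ} (ha : 0 ≤ a) (hb : 0 ≤ b)
    (hA : ∫ x, f x * f x ∂m ≤ a ^ 2) (hB : ∫ x, g x * g x ∂m ≤ b ^ 2) :
    ∫ x, |f x * g x| ∂m ≤ a * b := by
  have hAnn : 0 ≤ ∫ x, f x * f x ∂m := integral_nonneg fun x => mul_self_nonneg _
  have hBnn : 0 ≤ ∫ x, g x * g x ∂m := integral_nonneg fun x => mul_self_nonneg _
  have key : ∀ s : ℝ, 0 < s →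
      ∫ x, |f x * g x| ∂m ≤ (s * a ^ 2 + s⁻¹ * b ^ 2) / 2 := by
    intro s hs
    have hint : Integrable (fun x => (s * (f x * f x) + s⁻¹ * (g x * g x)) / 2) m :=
      ((hf.const_mul s).add (hg.const_mul s⁻¹)).div_const 2
    have h1 : ∫ x, |f x * g x| ∂m
        ≤ ∫ x, (s * (f x * f x) + s⁻¹ * (g x * g x)) / 2 ∂m := by
      refine integral_mono hfg.abs hint fun x => ?_
      have hinv : s * s⁻¹ = 1 := mul_inv_cancel₀ hs.ne'
      rcases abs_cases (f x * g x) with ⟨h4, _⟩ | ⟨h4, _⟩ <;> rw [h4] <;>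
        nlinarith [sq_nonneg (s * f x - g x), sq_nonneg (s * f x + g x), hs,
          mul_pos hs hs]
    have h2 : ∫ x, (s * (f x * f x) + s⁻¹ * (g x * g x)) / 2 ∂m
        = (s * ∫ x, f x * f x ∂m + s⁻¹ * ∫ x, g x * g x ∂m) / 2 := by
      rw [integral_div, integral_add (hf.const_mul s) (hg.const_mul s⁻¹),
        integral_const_mul, integral_const_mul]
    have h3 : (s * ∫ x, f x * f x ∂m + s⁻¹ * ∫ x, g x * g x ∂m) / 2
        ≤ (s * a ^ 2 + s⁻¹ * b ^ 2) / 2 := by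
      gcongr
    linarith [h1, h2 ▸ h1]
  have zero_case : ∀ (F G : X → ℝ), Integrable (fun x => F x * G x) m →
      Integrable (fun x => F x * F x) m → (∫ x, F x * F x ∂m ≤ 0) →
      ∫ x, |F x * G x| ∂m = 0 := by
    intro F G hFG hFF hFle
    have hz : ∫ x, F x * F x ∂m = 0 :=
      le_antisymm hFle (integral_nonneg fun x => mul_self_nonneg _)
    have hF0 : (fun x => F x * F x) =ᵐ[m] 0 :=
      (integral_eq_zero_iff_of_nonneg (fun x => mul_self_nonneg _) hFF).mp hz
    have h0 : (fun x => |F x * G x|) =ᵐ[m] 0 := by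
      refine hF0.mono fun x hx => ?_
      have : F x = 0 := by
        have : F x * F x = 0 := hx
        exact mul_self_eq_zero.mp this
      simp [this]
    rw [integral_congr_ae h0]; simp
  rcases eq_or_lt_of_le ha with ha0 | ha
  · have := zero_case f g hfg hf (by rw [← ha0] at hA; simpa using hA)
    rw [this, ← ha0, zero_mul]
  rcases eq_or_lt_of_le hb with hb0 | hb
  · have hgf : Integrable (fun x => g x * f x) m := by
      simpa [mul_comm] using hfg
    have := zero_case g f hgf hg (by rw [← hb0] at hB; simpa using hB)
    have h' : ∫ x, |f x * g x| ∂m = 0 := by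
      simpa [mul_comm] using this
    rw [h', ← hb0, mul_zero]
  · have h := key (b / a) (div_pos hb ha)
    have : ((b / a) * a ^ 2 + (b / a)⁻¹ * b ^ 2) / 2 = a * b := by
      field_simp
      ring
    linarith [this ▸ h]

/-- The bilinear form `a(μ; u, v) = α ∫_Ω ∇u·∇v + ∫_Ω μ u v + ζ⁻¹ ∫_{∂Ω} u v`
of the Robin problem, in an abstract Hilbert-space model of `H¹(Ω)`:
`grad` is the gradient operator, `ι` the embedding into functions on `Ω`
(`L²(Ω)`), and `τ` the trace operator onto the boundary `Γ = ∂Ω`. -/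
noncomputable def bform {V G Ω Γ : Type*}
    [NormedAddCommGroup V] [InnerProductSpace ℝ V]
    [NormedAddCommGroup G] [InnerProductSpace ℝ G]
    [MeasurableSpace Ω] [MeasurableSpace Γ]
    (vol : Measure Ω) (surf : Measure Γ)
    (α ζ : ℝ) (grad : V →ₗ[ℝ] G) (ι : V →ₗ[ℝ] Ω → ℝ) (τ : V →ₗ[ℝ] Γ → ℝ)
    (μ : Ω → ℝ) (u v : V) : ℝ :=
  α * ⟪grad u, grad v⟫ + (∫ x, μ x * ι u x * ι v x ∂vol)
    + ζ⁻¹ * ∫ y, τ u y * τ v y ∂surf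

/-- For `μ` in the interior of the admissible set and an admissible
direction `ν`, the solution operator `F` is (Fréchet) differentiable at `μ`: there is a
unique `u̇ ∈ H¹(Ω)` with `a(μ; u̇, v) = −∫_Ω ν u v` for all `v`, and the remainder
estimate `‖F(μ+ν) − F(μ) − u̇‖ ≤ c_b³ c_f ‖ν‖²_{L^∞}` holds. -/
theorem statement_3 {V G Ω Γ : Type*}
    [NormedAddCommGroup V] [InnerProductSpace ℝ V] [CompleteSpace V]
    [NormedAddCommGroup G] [InnerProductSpace ℝ G]
    [MeasurableSpace Ω] [MeasurableSpace Γ]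
    (vol : Measure Ω) (surf : Measure Γ)
    (α ζ μmin μmax : ℝ) (hα : 0 < α) (hζ : 0 < ζ) (hμmin : 0 < μmin)
    (grad : V →ₗ[ℝ] G) (ι : V →ₗ[ℝ] Ω → ℝ) (τ : V →ₗ[ℝ] Γ → ℝ)
    -- the `H¹(Ω)` norm of `V`
    (hnorm : ∀ v : V, ‖v‖ ^ 2 = ‖grad v‖ ^ 2 + ∫ x, (ι v x) ^ 2 ∂vol)
    -- boundedness of the trace operator
    (Ct : ℝ) (hCt : 0 < Ct)
    (htr : ∀ v : V, ∫ y, (τ v y) ^ 2 ∂surf ≤ Ct * ‖v‖ ^ 2)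
    -- integrability of the products appearing in the computations
    (hι : ∀ (w : Ω → ℝ) (u v : V), Integrable (fun x => w x * ι u x * ι v x) vol)
    (hτ : ∀ u v : V, Integrable (fun y => τ u y * τ v y) surf)
    (l : V →L[ℝ] ℝ)
    (μ ν : Ω → ℝ)
    -- `μ` lies in the interior of `A` and `μ + ν ∈ A`
    (hμ : ∀ᵐ x ∂vol, μmin < μ x ∧ μ x < μmax)
    (hμν : ∀ᵐ x ∂vol, μmin ≤ μ x + ν x ∧ μ x + ν x ≤ μmax)
    (K : ℝ) (hK0 : 0 ≤ K) (hK : ∀ᵐ x ∂vol, |ν x| ≤ K)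
    -- `u = F(μ)` and `u' = F(μ + ν)` are the corresponding states
    (u u' : V)
    (hu : ∀ v : V, bform vol surf α ζ grad ι τ μ u v = l v)
    (hu' : ∀ v : V, bform vol surf α ζ grad ι τ (μ + ν) u' v = l v) :
    (∃! ud : V, ∀ v : V,
        bform vol surf α ζ grad ι τ μ ud v = -∫ x, ν x * ι u x * ι v x ∂vol) ∧
    (∀ ud : V, (∀ v : V,
        bform vol surf α ζ grad ι τ μ ud v = -∫ x, ν x * ι u x * ι v x ∂vol) →
      ‖u' - u - ud‖ ≤ ((min α μmin)⁻¹) ^ 3 * ‖l‖ * K ^ 2) := by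
  classical
  set c : ℝ := min α μmin with hcdef
  have hc : 0 < c := lt_min hα hμmin
  have hcinv : (0:ℝ) ≤ c⁻¹ := (inv_pos.2 hc).le
  -- basic integrability
  have hι1 : ∀ p q : V, Integrable (fun x => ι p x * ι q x) vol := fun p q => by
    simpa using hι (fun _ => 1) p q
  -- norm facts
  have hιsq : ∀ v : V, ∫ x, ι v x * ι v x ∂vol ≤ ‖v‖ ^ 2 := by
    intro v
    have h1 : ∫ x, ι v x * ι v x ∂vol = ∫ x, (ι v x) ^ 2 ∂vol := by simp_rw [pow_two]
    have h2 := hnorm v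
    nlinarith [sq_nonneg ‖grad v‖]
  have hgrad : ∀ v : V, ‖grad v‖ ≤ ‖v‖ := by
    intro v
    have h2 := hnorm v
    have h3 : 0 ≤ ∫ x, (ι v x) ^ 2 ∂vol := integral_nonneg fun x => sq_nonneg _
    nlinarith [norm_nonneg (grad v), norm_nonneg v]
  have hinner : ∀ p q : V, |⟪grad p, grad q⟫| ≤ ‖p‖ * ‖q‖ := fun p q =>
    (abs_real_inner_le_norm _ _).trans
      (mul_le_mul (hgrad p) (hgrad q) (norm_nonneg _) (norm_nonneg _))
  -- Cauchy–Schwarz consequences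
  have CSι : ∀ p q : V, ∫ x, |ι p x * ι q x| ∂vol ≤ ‖p‖ * ‖q‖ := fun p q =>
    int_abs_mul_le (hι1 p q) (hι1 p p) (hι1 q q) (norm_nonneg p) (norm_nonneg q)
      (hιsq p) (hιsq q)
  have hτsq : ∀ v : V, ∫ y, τ v y * τ v y ∂surf ≤ (Real.sqrt Ct * ‖v‖) ^ 2 := by
    intro v
    have h1 : ∫ y, τ v y * τ v y ∂surf = ∫ y, (τ v y) ^ 2 ∂surf := by simp_rw [pow_two]
    rw [h1, mul_pow, Real.sq_sqrt hCt.le]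
    exact htr v
  have CSτ : ∀ p q : V, ∫ y, |τ p y * τ q y| ∂surf ≤ Ct * (‖p‖ * ‖q‖) := by
    intro p q
    have h := int_abs_mul_le (hτ p q) (hτ p p) (hτ q q)
      (mul_nonneg (Real.sqrt_nonneg _) (norm_nonneg _))
      (mul_nonneg (Real.sqrt_nonneg _) (norm_nonneg _)) (hτsq p) (hτsq q)
    calc ∫ y, |τ p y * τ q y| ∂surf ≤ (Real.sqrt Ct * ‖p‖) * (Real.sqrt Ct * ‖q‖) := h
      _ = (Real.sqrt Ct * Real.sqrt Ct) * (‖p‖ * ‖q‖) := by ring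
      _ = Ct * (‖p‖ * ‖q‖) := by rw [Real.mul_self_sqrt hCt.le]
  -- weighted bound
  have wbound : ∀ (w : Ω → ℝ) (Kw : ℝ), 0 ≤ Kw → (∀ᵐ x ∂vol, |w x| ≤ Kw) → ∀ p q : V,
      |∫ x, w x * ι p x * ι q x ∂vol| ≤ Kw * (‖p‖ * ‖q‖) := by
    intro w Kw hKw hw p q
    have h1 : |∫ x, w x * ι p x * ι q x ∂vol| ≤ ∫ x, |w x * ι p x * ι q x| ∂vol := by
      simpa only [Real.norm_eq_abs] using
        norm_integral_le_integral_norm (μ := vol) (fun x => w x * ι p x * ι q x)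
    have h2 : ∫ x, |w x * ι p x * ι q x| ∂vol ≤ ∫ x, Kw * |ι p x * ι q x| ∂vol := by
      refine integral_mono_ae (hι w p q).abs ((hι1 p q).abs.const_mul Kw) ?_
      refine hw.mono fun x hx => ?_
      calc |w x * ι p x * ι q x| = |w x| * |ι p x * ι q x| := by rw [mul_assoc, abs_mul]
        _ ≤ Kw * |ι p x * ι q x| := mul_le_mul_of_nonneg_right hx (abs_nonneg _)
    have h3 : ∫ x, Kw * |ι p x * ι q x| ∂vol = Kw * ∫ x, |ι p x * ι q x| ∂vol :=
      integral_const_mul _ _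
    have h4 := mul_le_mul_of_nonneg_left (CSι p q) hKw
    linarith [h3 ▸ h2]
  have hμabs : ∀ᵐ x ∂vol, |μ x| ≤ |μmax| := by
    refine hμ.mono fun x hx => abs_le.2 ⟨?_, hx.2.le.trans (le_abs_self _)⟩
    have h0 : (0:ℝ) ≤ |μmax| := abs_nonneg _
    nlinarith [hx.1, hμmin]
  have hμ' : ∀ᵐ x ∂vol, μmin ≤ μ x := hμ.mono fun x hx => hx.1.le
  -- coercivity
  have coer : ∀ (w : Ω → ℝ), (∀ᵐ x ∂vol, μmin ≤ w x) → ∀ v : V,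
      c * ‖v‖ ^ 2 ≤ bform vol surf α ζ grad ι τ w v v := by
    intro w hw v
    have h1 : μmin * ∫ x, ι v x * ι v x ∂vol ≤ ∫ x, w x * ι v x * ι v x ∂vol := by
      rw [← integral_const_mul]
      refine integral_mono_ae ((hι1 v v).const_mul μmin) (hι w v v) ?_
      refine hw.mono fun x hx => ?_
      show μmin * (ι v x * ι v x) ≤ w x * ι v x * ι v x
      have h0 := mul_self_nonneg (ι v x)
      calc μmin * (ι v x * ι v x) ≤ w x * (ι v x * ι v x) :=
            mul_le_mul_of_nonneg_right hx h0
        _ = w x * ι v x * ι v x := by ring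
    have h2 : 0 ≤ ∫ y, τ v y * τ v y ∂surf := integral_nonneg fun y => mul_self_nonneg _
    have h3 : ⟪grad v, grad v⟫ = ‖grad v‖ ^ 2 := real_inner_self_eq_norm_sq _
    have h4 : ∫ x, ι v x * ι v x ∂vol = ∫ x, (ι v x) ^ 2 ∂vol := by simp_rw [pow_two]
    have h5 := hnorm v
    have h6 : 0 ≤ ∫ x, (ι v x) ^ 2 ∂vol := integral_nonneg fun x => sq_nonneg _
    have hca : c ≤ α := min_le_left _ _
    have hcm : c ≤ μmin := min_le_right _ _
    have h7 : 0 ≤ ζ⁻¹ * ∫ y, τ v y * τ v y ∂surf := mul_nonneg (inv_pos.2 hζ).le h2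
    have h8 : c * ‖grad v‖ ^ 2 ≤ α * ‖grad v‖ ^ 2 :=
      mul_le_mul_of_nonneg_right hca (sq_nonneg _)
    have h9 : c * ∫ x, (ι v x) ^ 2 ∂vol ≤ μmin * ∫ x, (ι v x) ^ 2 ∂vol :=
      mul_le_mul_of_nonneg_right hcm h6
    have h10 : c * ‖v‖ ^ 2 = c * ‖grad v‖ ^ 2 + c * ∫ x, (ι v x) ^ 2 ∂vol := by
      rw [h5]; ring
    rw [h4] at h1
    unfold bform
    rw [h3]
    linarith
  -- linearity lemmas
  have bsub : ∀ (w : Ω → ℝ) (p q v : V),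
      bform vol surf α ζ grad ι τ w (p - q) v
        = bform vol surf α ζ grad ι τ w p v - bform vol surf α ζ grad ι τ w q v := by
    intro w p q v
    unfold bform
    simp only [map_sub, Pi.sub_apply, inner_sub_left]
    have e1 : ∫ x, w x * (ι p x - ι q x) * ι v x ∂vol
        = (∫ x, w x * ι p x * ι v x ∂vol) - ∫ x, w x * ι q x * ι v x ∂vol := by
      rw [← integral_sub (hι w p v) (hι w q v)]
      exact integral_congr_ae (.of_forall fun x => by ring)
    have e2 : ∫ y, (τ p y - τ q y) * τ v y ∂surf
        = (∫ y, τ p y * τ v y ∂surf) - ∫ y, τ q y * τ v y ∂surf := by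
      rw [← integral_sub (hτ p v) (hτ q v)]
      exact integral_congr_ae (.of_forall fun x => by ring)
    rw [e1, e2]; ring
  have bmeas : ∀ p q : V, bform vol surf α ζ grad ι τ (μ + ν) p q
      = bform vol surf α ζ grad ι τ μ p q + ∫ x, ν x * ι p x * ι q x ∂vol := by
    intro p q
    unfold bform
    have e1 : ∫ x, (μ + ν) x * ι p x * ι q x ∂vol
        = (∫ x, μ x * ι p x * ι q x ∂vol) + ∫ x, ν x * ι p x * ι q x ∂vol := by
      rw [← integral_add (hι μ p q) (hι ν p q)]
      refine integral_congr_ae (.of_forall fun x => ?_)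
      simp only [Pi.add_apply]
      ring
    rw [e1]; ring
  have badd_l : ∀ p₁ p₂ q : V,
      bform vol surf α ζ grad ι τ μ (p₁ + p₂) q
        = bform vol surf α ζ grad ι τ μ p₁ q + bform vol surf α ζ grad ι τ μ p₂ q := by
    intro p₁ p₂ q
    unfold bform
    simp only [map_add, Pi.add_apply, inner_add_left]
    have e1 : ∫ x, μ x * (ι p₁ x + ι p₂ x) * ι q x ∂vol
        = (∫ x, μ x * ι p₁ x * ι q x ∂vol) + ∫ x, μ x * ι p₂ x * ι q x ∂vol := by
      rw [← integral_add (hι μ p₁ q) (hι μ p₂ q)]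
      exact integral_congr_ae (.of_forall fun x => by ring)
    have e2 : ∫ y, (τ p₁ y + τ p₂ y) * τ q y ∂surf
        = (∫ y, τ p₁ y * τ q y ∂surf) + ∫ y, τ p₂ y * τ q y ∂surf := by
      rw [← integral_add (hτ p₁ q) (hτ p₂ q)]
      exact integral_congr_ae (.of_forall fun x => by ring)
    rw [e1, e2]; ring
  have badd_r : ∀ p q₁ q₂ : V,
      bform vol surf α ζ grad ι τ μ p (q₁ + q₂)
        = bform vol surf α ζ grad ι τ μ p q₁ + bform vol surf α ζ grad ι τ μ p q₂ := by
    intro p q₁ q₂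
    unfold bform
    simp only [map_add, Pi.add_apply, inner_add_right]
    have e1 : ∫ x, μ x * ι p x * (ι q₁ x + ι q₂ x) ∂vol
        = (∫ x, μ x * ι p x * ι q₁ x ∂vol) + ∫ x, μ x * ι p x * ι q₂ x ∂vol := by
      rw [← integral_add (hι μ p q₁) (hι μ p q₂)]
      exact integral_congr_ae (.of_forall fun x => by ring)
    have e2 : ∫ y, τ p y * (τ q₁ y + τ q₂ y) ∂surf
        = (∫ y, τ p y * τ q₁ y ∂surf) + ∫ y, τ p y * τ q₂ y ∂surf := by
      rw [← integral_add (hτ p q₁) (hτ p q₂)]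
      exact integral_congr_ae (.of_forall fun x => by ring)
    rw [e1, e2]; ring
  have bsmul_l : ∀ (s : ℝ) (p q : V),
      bform vol surf α ζ grad ι τ μ (s • p) q
        = s * bform vol surf α ζ grad ι τ μ p q := by
    intro s p q
    unfold bform
    simp only [_root_.map_smul, Pi.smul_apply, smul_eq_mul, real_inner_smul_left]
    have e1 : ∫ x, μ x * (s * ι p x) * ι q x ∂vol
        = s * ∫ x, μ x * ι p x * ι q x ∂vol := by
      rw [← integral_const_mul]
      exact integral_congr_ae (.of_forall fun x => by ring)
    have e2 : ∫ y, s * τ p y * τ q y ∂surf = s * ∫ y, τ p y * τ q y ∂surf := by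
      rw [← integral_const_mul]
      exact integral_congr_ae (.of_forall fun x => by ring)
    rw [e1, e2]; ring
  have bsmul_r : ∀ (s : ℝ) (p q : V),
      bform vol surf α ζ grad ι τ μ p (s • q)
        = s * bform vol surf α ζ grad ι τ μ p q := by
    intro s p q
    unfold bform
    simp only [_root_.map_smul, Pi.smul_apply, smul_eq_mul, real_inner_smul_right]
    have e1 : ∫ x, μ x * ι p x * (s * ι q x) ∂vol
        = s * ∫ x, μ x * ι p x * ι q x ∂vol := by
      rw [← integral_const_mul]
      exact integral_congr_ae (.of_forall fun x => by ring)
    have e2 : ∫ y, τ p y * (s * τ q y) ∂surf = s * ∫ y, τ p y * τ q y ∂surf := by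
      rw [← integral_const_mul]
      exact integral_congr_ae (.of_forall fun x => by ring)
    rw [e1, e2]; ring
  -- boundedness
  have hbound : ∀ p q : V, ‖bform vol surf α ζ grad ι τ μ p q‖
      ≤ (α + |μmax| + ζ⁻¹ * Ct) * ‖p‖ * ‖q‖ := by
    intro p q
    rw [Real.norm_eq_abs]
    have h1 : |α * ⟪grad p, grad q⟫| ≤ α * (‖p‖ * ‖q‖) := by
      rw [abs_mul, abs_of_pos hα]
      exact mul_le_mul_of_nonneg_left (hinner p q) hα.le
    have h2 := wbound μ |μmax| (abs_nonneg _) hμabs p q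
    have h3 : |ζ⁻¹ * ∫ y, τ p y * τ q y ∂surf| ≤ ζ⁻¹ * (Ct * (‖p‖ * ‖q‖)) := by
      rw [abs_mul, abs_of_pos (inv_pos.2 hζ)]
      refine mul_le_mul_of_nonneg_left (le_trans ?_ (CSτ p q)) (inv_pos.2 hζ).le
      simpa only [Real.norm_eq_abs] using
        norm_integral_le_integral_norm (μ := surf) (fun y => τ p y * τ q y)
    have h4 : (α + |μmax| + ζ⁻¹ * Ct) * ‖p‖ * ‖q‖
        = α * (‖p‖ * ‖q‖) + |μmax| * (‖p‖ * ‖q‖) + ζ⁻¹ * (Ct * (‖p‖ * ‖q‖)) := by ring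
    unfold bform
    rw [h4]
    calc |α * ⟪grad p, grad q⟫ + (∫ x, μ x * ι p x * ι q x ∂vol)
          + ζ⁻¹ * ∫ y, τ p y * τ q y ∂surf|
        ≤ |α * ⟪grad p, grad q⟫ + ∫ x, μ x * ι p x * ι q x ∂vol|
          + |ζ⁻¹ * ∫ y, τ p y * τ q y ∂surf| := abs_add_le _ _
      _ ≤ |α * ⟪grad p, grad q⟫| + |∫ x, μ x * ι p x * ι q x ∂vol|
          + |ζ⁻¹ * ∫ y, τ p y * τ q y ∂surf| := by
            linarith [abs_add_le (α * ⟪grad p, grad q⟫) (∫ x, μ x * ι p x * ι q x ∂vol)]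
      _ ≤ _ := by linarith
  -- the continuous bilinear form
  let Bb : V →L[ℝ] V →L[ℝ] ℝ :=
    LinearMap.mkContinuous₂
      (LinearMap.mk₂ ℝ (fun p q => bform vol surf α ζ grad ι τ μ p q)
        badd_l bsmul_l badd_r bsmul_r)
      (α + |μmax| + ζ⁻¹ * Ct) hbound
  have hBapp : ∀ p q : V, Bb p q = bform vol surf α ζ grad ι τ μ p q := fun p q => rfl
  have coB : IsCoercive Bb := by
    refine ⟨c, hc, fun v => ?_⟩
    rw [hBapp]
    calc c * ‖v‖ * ‖v‖ = c * ‖v‖ ^ 2 := by ring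
      _ ≤ _ := coer μ hμ' v
  -- the right-hand side functional
  have rbound : ∀ q : V, ‖-∫ x, ν x * ι u x * ι q x ∂vol‖ ≤ K * ‖u‖ * ‖q‖ := by
    intro q
    rw [norm_neg, Real.norm_eq_abs]
    calc |∫ x, ν x * ι u x * ι q x ∂vol| ≤ K * (‖u‖ * ‖q‖) := wbound ν K hK0 hK u q
      _ = K * ‖u‖ * ‖q‖ := by ring
  let rlm : V →ₗ[ℝ] ℝ :=
    { toFun := fun q => -∫ x, ν x * ι u x * ι q x ∂vol
      map_add' := by
        intro q₁ q₂
        simp only [map_add, Pi.add_apply]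
        rw [show (∫ x, ν x * ι u x * (ι q₁ x + ι q₂ x) ∂vol)
            = (∫ x, ν x * ι u x * ι q₁ x ∂vol) + ∫ x, ν x * ι u x * ι q₂ x ∂vol from by
          rw [← integral_add (hι ν u q₁) (hι ν u q₂)]
          exact integral_congr_ae (.of_forall fun x => by ring)]
        ring
      map_smul' := by
        intro s q
        simp only [_root_.map_smul, Pi.smul_apply, smul_eq_mul, RingHom.id_apply]
        rw [show (∫ x, ν x * ι u x * (s * ι q x) ∂vol)
            = s * ∫ x, ν x * ι u x * ι q x ∂vol from by
          rw [← integral_const_mul]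
          exact integral_congr_ae (.of_forall fun x => by ring)]
        ring }
  let r : V →L[ℝ] ℝ := LinearMap.mkContinuous rlm (K * ‖u‖) rbound
  -- existence of ud
  let ee := coB.continuousLinearEquivOfBilin
  let z : V := (InnerProductSpace.toDual ℝ V).symm r
  let ud₀ : V := ee.symm z
  have hud₀ : ∀ v : V,
      bform vol surf α ζ grad ι τ μ ud₀ v = -∫ x, ν x * ι u x * ι v x ∂vol := by
    intro v
    have h1 : ⟪ee ud₀, v⟫ = Bb ud₀ v := coB.continuousLinearEquivOfBilin_apply ud₀ v
    have h2 : ee ud₀ = z := ee.apply_symm_apply z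
    have h3 : ⟪z, v⟫ = r v := InnerProductSpace.toDual_symm_apply
    rw [← hBapp, ← h1, h2, h3]
    rfl
  -- uniqueness
  have uniq0 : ∀ d : V, (∀ v : V, bform vol surf α ζ grad ι τ μ d v = 0) → d = 0 := by
    intro d hd
    have h1 := coer μ hμ' d
    rw [hd d] at h1
    have h2 : ‖d‖ ^ 2 ≤ 0 := by nlinarith
    have h3 : ‖d‖ ^ 2 = 0 := le_antisymm h2 (sq_nonneg _)
    exact norm_eq_zero.mp (sq_eq_zero_iff.mp h3)
  -- energy estimate
  have key : ∀ (w : Ω → ℝ), (∀ᵐ x ∂vol, μmin ≤ w x) → ∀ (d z' : V),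
      (∀ v : V, bform vol surf α ζ grad ι τ w d v = -∫ x, ν x * ι z' x * ι v x ∂vol) →
      ‖d‖ ≤ c⁻¹ * (K * ‖z'‖) := by
    intro w hw d z' hd
    have h1 := coer w hw d
    rw [hd d] at h1
    have h3 := wbound ν K hK0 hK z' d
    have h4 : c * ‖d‖ ^ 2 ≤ K * (‖z'‖ * ‖d‖) := by
      calc c * ‖d‖ ^ 2 ≤ -∫ x, ν x * ι z' x * ι d x ∂vol := h1
        _ ≤ |∫ x, ν x * ι z' x * ι d x ∂vol| := neg_le_abs _
        _ ≤ K * (‖z'‖ * ‖d‖) := h3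
    rcases eq_or_lt_of_le (norm_nonneg d) with h0 | h0
    · rw [← h0]
      positivity
    · have h5 : c * ‖d‖ ≤ K * ‖z'‖ := by
        have h6 : c * ‖d‖ * ‖d‖ ≤ K * ‖z'‖ * ‖d‖ := by nlinarith
        exact (mul_le_mul_iff_of_pos_right h0).mp h6
      calc ‖d‖ = c⁻¹ * (c * ‖d‖) := by field_simp
        _ ≤ c⁻¹ * (K * ‖z'‖) := mul_le_mul_of_nonneg_left h5 hcinv
  -- bound on ‖u‖
  have hubound : ‖u‖ ≤ c⁻¹ * ‖l‖ := by
    have h1 := coer μ hμ' u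
    rw [hu u] at h1
    have h2 : l u ≤ ‖l‖ * ‖u‖ := by
      calc l u ≤ |l u| := le_abs_self _
        _ = ‖l u‖ := (Real.norm_eq_abs _).symm
        _ ≤ ‖l‖ * ‖u‖ := l.le_opNorm u
    rcases eq_or_lt_of_le (norm_nonneg u) with h0 | h0
    · rw [← h0]
      positivity
    · have h5 : c * ‖u‖ ≤ ‖l‖ := by
        have h6 : c * ‖u‖ * ‖u‖ ≤ ‖l‖ * ‖u‖ := by nlinarith
        exact (mul_le_mul_iff_of_pos_right h0).mp h6
      calc ‖u‖ = c⁻¹ * (c * ‖u‖) := by field_simp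
        _ ≤ c⁻¹ * ‖l‖ := mul_le_mul_of_nonneg_left h5 hcinv
  -- equations for the increments
  have hμν' : ∀ᵐ x ∂vol, μmin ≤ (μ + ν) x := hμν.mono fun x hx => by
    simpa [Pi.add_apply] using hx.1
  have heq1 : ∀ v : V, bform vol surf α ζ grad ι τ (μ + ν) (u' - u) v
      = -∫ x, ν x * ι u x * ι v x ∂vol := by
    intro v
    rw [bsub (μ + ν) u' u v, hu' v, bmeas u v, hu v]
    ring
  have hdiff : ‖u' - u‖ ≤ c⁻¹ * (K * ‖u‖) := key (μ + ν) hμν' (u' - u) u heq1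
  have heq2 : ∀ v : V, bform vol surf α ζ grad ι τ μ (u' - u) v
      = -∫ x, ν x * ι u' x * ι v x ∂vol := by
    intro v
    have h1 := bmeas u' v
    rw [hu' v] at h1
    rw [bsub μ u' u v, hu v]
    linarith
  constructor
  · refine ⟨ud₀, hud₀, fun y hy => ?_⟩
    have h1 : y - ud₀ = 0 := by
      refine uniq0 _ fun v => ?_
      rw [bsub μ y ud₀ v, hy v, hud₀ v]
      ring
    exact sub_eq_zero.mp h1
  · intro ud hud
    have heq3 : ∀ v : V, bform vol surf α ζ grad ι τ μ (u' - u - ud) v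
        = -∫ x, ν x * ι (u' - u) x * ι v x ∂vol := by
      intro v
      rw [bsub μ (u' - u) ud v, heq2 v, hud v]
      have e1 : ∫ x, ν x * ι (u' - u) x * ι v x ∂vol
          = (∫ x, ν x * ι u' x * ι v x ∂vol) - ∫ x, ν x * ι u x * ι v x ∂vol := by
        rw [← integral_sub (hι ν u' v) (hι ν u v)]
        refine integral_congr_ae (.of_forall fun x => ?_)
        simp only [map_sub, Pi.sub_apply]
        ring
      rw [e1]
      ring
    have hrem : ‖u' - u - ud‖ ≤ c⁻¹ * (K * ‖u' - u‖) := key μ hμ' _ _ heq3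
    have step2 : c⁻¹ * (K * ‖u' - u‖) ≤ c⁻¹ * (K * (c⁻¹ * (K * ‖u‖))) :=
      mul_le_mul_of_nonneg_left (mul_le_mul_of_nonneg_left hdiff hK0) hcinv
    have step3 : c⁻¹ * (K * (c⁻¹ * (K * ‖u‖)))
        ≤ c⁻¹ * (K * (c⁻¹ * (K * (c⁻¹ * ‖l‖)))) :=
      mul_le_mul_of_nonneg_left (mul_le_mul_of_nonneg_left
        (mul_le_mul_of_nonneg_left (mul_le_mul_of_nonneg_left hubound hK0) hcinv) hK0) hcinv
    calc ‖u' - u - ud‖ ≤ c⁻¹ * (K * ‖u' - u‖) := hrem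
      _ ≤ c⁻¹ * (K * (c⁻¹ * (K * (c⁻¹ * ‖l‖)))) := le_trans step2 step3
      _ = (c⁻¹) ^ 3 * ‖l‖ * K ^ 2 := by ring
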